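/- Let G be a connected simple graph on n ≥ 3 vertices with Randić index R, algebraic connectivity a, and diameter D. If D ≤ (n-1)^{1/4}, then R·a ≥ (n - 3 + 2√2)(1 - cos(π/n)); that is, R·a is at least the value of the product of the Randić index and the algebraic connectivity of the path P_n. -/

import Mathlib

open Finset Real Matrix

/-- The Randić index of a finite simple graph:
`R(G) = ∑_{uv ∈ E(G)} 1/√(d(u)·d(v))`. -/
noncomputable def randicIndex {V : Type*} [Fintype V] (G : SimpleGraph V) : ℝ :=
  letI : DecidableRel G.Adj := Classical.decRel _
  ∑ e ∈ G.edgeFinset,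
    Sym2.lift ⟨fun u v => 1 / Real.sqrt ((G.degree u : ℝ) * (G.degree v : ℝ)),
      fun u v => by simp [mul_comm]⟩ e

/-- The algebraic connectivity of a graph on `Fin n`: the second smallest eigenvalue
of the Laplacian matrix, characterized (via Courant–Fischer, since the all-ones vector
is an eigenvector of the smallest eigenvalue `0`) as the infimum of the Rayleigh
quotient over nonzero vectors orthogonal to the all-ones vector. -/
noncomputable def algebraicConnectivity {n : ℕ} (G : SimpleGraph (Fin n)) : ℝ :=
  letI : DecidableRel G.Adj := Classical.decRel _
  sInf {r : ℝ | ∃ x : Fin n → ℝ, x ≠ 0 ∧ (∑ i, x i) = 0 ∧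
    r = (x ⬝ᵥ ((G.lapMatrix ℝ).mulVec x)) / (x ⬝ᵥ x)}

/-- The edge connectivity of a graph: the least number of edges whose deletion
disconnects the graph. -/
noncomputable def edgeConnectivity {V : Type*} [Fintype V] (G : SimpleGraph V) : ℕ :=
  sInf {k : ℕ | ∃ s : Set (Sym2 V), s ⊆ G.edgeSet ∧ s.ncard = k ∧
    ¬ (G.deleteEdges s).Connected}

/-- The star `K_{1,n-1}` on vertex set `Fin n`: vertex `0` is adjacent to all others. -/
def starGraph (n : ℕ) : SimpleGraph (Fin n) where
  Adj i j := i ≠ j ∧ ((i : ℕ) = 0 ∨ (j : ℕ) = 0)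
  symm := ⟨fun _ _ h => ⟨h.1.symm, h.2.symm⟩⟩
  loopless := ⟨fun _ h => h.1 rfl⟩


section Aux
variable {V : Type*} [Fintype V] [DecidableEq V]

lemma sum_edgeFinset_lift (G : SimpleGraph V) [DecidableRel G.Adj]
    (f : V → V → ℝ) (hf : ∀ a b, f a b = f b a) :
    2 * ∑ e ∈ G.edgeFinset, Sym2.lift ⟨f, hf⟩ e =
      ∑ i, ∑ j, if G.Adj i j then f i j else 0 := by
  classical
  have hdart : ∑ d : G.Dart, f d.fst d.snd = ∑ i, ∑ j, if G.Adj i j then f i j else 0 := by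
    rw [← Finset.sum_product', Finset.sum_ite, Finset.sum_const_zero, add_zero]
    exact Finset.sum_bij' (fun (d : G.Dart) (_ : d ∈ univ) => (d.fst, d.snd))
      (fun p hp => SimpleGraph.Dart.mk p (by simpa using (Finset.mem_filter.1 hp).2))
      (fun d _ => by simp [d.adj]) (fun p hp => Finset.mem_univ _)
      (fun d _ => rfl) (fun p hp => rfl) (fun d _ => rfl)
  have hfiber : ∑ d : G.Dart, f d.fst d.snd
      = ∑ e ∈ G.edgeFinset, ∑ d ∈ Finset.univ.filter (fun d : G.Dart => d.edge = e),
          f d.fst d.snd :=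
    (Finset.sum_fiberwise_of_maps_to (fun d _ => by
      rw [SimpleGraph.mem_edgeFinset]; exact d.edge_mem) _).symm
  have hinner : ∀ e ∈ G.edgeFinset,
      ∑ d ∈ Finset.univ.filter (fun d : G.Dart => d.edge = e), f d.fst d.snd
        = 2 * Sym2.lift ⟨f, hf⟩ e := by
    intro e he
    rw [SimpleGraph.mem_edgeFinset] at he
    induction e with
    | _ u v =>
      let d : G.Dart := ⟨(u, v), he⟩
      have hfib : (Finset.univ.filter (fun d' : G.Dart => d'.edge = d.edge)) = {d, d.symm} := by
        simpa using d.edge_fiber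
      have hde : d.edge = s(u, v) := rfl
      rw [← hde, hfib, Finset.sum_pair d.symm_ne.symm]
      simp only [SimpleGraph.Dart.symm_toProd, d]
      simp [hf u v]
      rw [hf v u]; show f u v + f u v = 2 * f u v; ring
  rw [← hdart, hfiber, Finset.sum_congr rfl hinner, ← Finset.mul_sum]

lemma conn_degree_pos (G : SimpleGraph V) [DecidableRel G.Adj] (hG : G.Connected)
    (hV : 1 < Fintype.card V) (v : V) : 0 < G.degree v := by
  have : Nontrivial V := Fintype.one_lt_card_iff_nontrivial.mp hV
  obtain ⟨w, hw⟩ := exists_ne v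
  obtain ⟨p⟩ := hG.preconnected v w
  cases p with
  | nil => exact absurd rfl hw
  | cons h q => exact (SimpleGraph.degree_pos_iff_exists_adj G v).mpr ⟨_, h⟩

lemma conn_card_le_edges (G : SimpleGraph V) [DecidableRel G.Adj] (hG : G.Connected) :
    Fintype.card V ≤ #G.edgeFinset + 1 := by
  have hne : Nonempty V := hG.nonempty
  obtain ⟨r⟩ := hne
  have hpar : ∀ v : V, v ≠ r → ∃ y, G.Adj v y ∧ G.dist y r + 1 = G.dist v r := by
    intro v hv
    have hreach := hG.preconnected v r
    obtain ⟨p, hp⟩ := hreach.exists_walk_length_eq_dist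
    cases p with
    | nil => exact absurd rfl hv
    | cons h q =>
      rename_i y
      refine ⟨y, h, ?_⟩
      have h1 : G.dist y r ≤ q.length := SimpleGraph.dist_le q
      have h2 : q.length + 1 = G.dist v r := by simpa using hp
      have h3 : G.dist v r ≤ 1 + G.dist y r := by
        calc G.dist v r ≤ G.dist v y + G.dist y r := hG.dist_triangle
        _ ≤ 1 + G.dist y r := by
            have : G.dist v y ≤ 1 := by
              simpa using SimpleGraph.dist_le (SimpleGraph.Walk.cons h SimpleGraph.Walk.nil)
            omega
      omega
  classical
  set y : V → V := fun v => if h : v = r then v else Classical.choose (hpar v h) with hy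
  have hyadj : ∀ v : V, v ≠ r → G.Adj v (y v) := by
    intro v hv; rw [hy]; simp only [dif_neg hv]
    exact (Classical.choose_spec (hpar v hv)).1
  have hydist : ∀ v : V, v ≠ r → G.dist (y v) r + 1 = G.dist v r := by
    intro v hv; rw [hy]; simp only [dif_neg hv]
    exact (Classical.choose_spec (hpar v hv)).2
  have hcard : #(Finset.univ.erase r) ≤ #G.edgeFinset := by
    apply Finset.card_le_card_of_injOn (fun v => s(v, y v))
    · intro v hv
      rw [Finset.mem_coe, SimpleGraph.mem_edgeFinset]
      exact (hyadj v (Finset.ne_of_mem_erase hv))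
    · intro v hv w hw hvw
      have hv' := Finset.ne_of_mem_erase hv
      have hw' := Finset.ne_of_mem_erase hw
      rw [Sym2.eq_iff] at hvw
      rcases hvw with ⟨h1, h2⟩ | ⟨h1, h2⟩
      · exact h1
      · exfalso
        have d1 := hydist v hv'
        have d2 := hydist w hw'
        rw [h2] at d1
        rw [← h1] at d2
        omega
  have := Finset.card_erase_of_mem (Finset.mem_univ r)
  rw [Finset.card_univ] at this
  omega

lemma chord_sqrt {N : ℝ} (hN : 1 ≤ N) {d : ℝ} (h1 : 1 ≤ d) (h2 : d ≤ N) :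
    (N - 1) + (d - 1) * (Real.sqrt N - 1) ≤ (N - 1) * Real.sqrt d := by
  have hs1 : 1 ≤ Real.sqrt d := by
    rw [show (1:ℝ) = Real.sqrt 1 by simp]; exact Real.sqrt_le_sqrt h1
  have hsN : Real.sqrt d ≤ Real.sqrt N := Real.sqrt_le_sqrt h2
  have hsq : Real.sqrt d ^ 2 = d := Real.sq_sqrt (by linarith)
  have hsqN : Real.sqrt N ^ 2 = N := Real.sq_sqrt (by linarith)
  have hN1 : 1 ≤ Real.sqrt N := le_trans hs1 hsN
  nlinarith [mul_nonneg (sub_nonneg.mpr hs1) (sub_nonneg.mpr hsN),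
    mul_nonneg (sub_nonneg.mpr hs1) (sub_nonneg.mpr hN1), sq_nonneg (Real.sqrt d - 1)]

private def gx (x : V → ℝ) : Sym2 V → ℝ :=
  Sym2.lift ⟨fun a b => (x a - x b)^2, fun a b => by ring⟩

lemma gx_nonneg (x : V → ℝ) (e : Sym2 V) : 0 ≤ gx x e := by
  induction e with
  | _ a b => simp only [gx, Sym2.lift_mk]; positivity

lemma walk_sq_le {G : SimpleGraph V} (x : V → ℝ) {u v : V} (p : G.Walk u v) :
    (x u - x v)^2 ≤ (p.length : ℝ) * (p.edges.map (gx x)).sum := by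
  induction p with
  | nil => simp
  | @cons a b c hadj q ih =>
    simp only [SimpleGraph.Walk.length_cons, SimpleGraph.Walk.edges_cons, List.map_cons,
      List.sum_cons]
    have hS : (0:ℝ) ≤ (q.edges.map (gx x)).sum :=
      List.sum_nonneg (by
        intro y hy
        obtain ⟨e, _, rfl⟩ := List.mem_map.mp hy
        exact gx_nonneg x e)
    have hg : gx x s(a, b) = (x a - x b)^2 := rfl
    push_cast
    rw [hg]
    set A := x a - x b
    set B := x b - x c
    set L := (q.length : ℝ)
    set S := (q.edges.map (gx x)).sum
    have hL : (0:ℝ) ≤ L := by positivity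
    have key : (A + B)^2 ≤ (L + 1) * (A^2 + S) := by
      rcases Nat.eq_zero_or_pos q.length with h0 | hpos
      · have hL0 : L = 0 := by simp [L, h0]
        have hB2 : B^2 ≤ 0 := by rw [hL0] at ih; simpa using ih
        have hB : B = 0 := by nlinarith [sq_nonneg B]
        rw [hB, hL0]
        nlinarith [hS]
      · have hL1 : (1:ℝ) ≤ L := by
          rw [show L = ((q.length:ℕ):ℝ) from rfl]
          exact_mod_cast hpos
        have key2 : 0 ≤ L * ((L+1)*(A^2+S) - (A+B)^2) := by
          nlinarith [sq_nonneg (L*A - B), mul_le_mul_of_nonneg_left ih hL, ih, hS, hL,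
            mul_nonneg hL hS]
        nlinarith [key2, hL1, mul_nonneg hL hS]
    calc (x a - x c)^2 = (A + B)^2 := by show (x a - x c)^2 = ((x a - x b) + (x b - x c))^2; ring
      _ ≤ (L + 1) * (A^2 + S) := key
      _ = (L + 1) * ((x a - x b)^2 + S) := rfl

lemma ediam_ne_top (G : SimpleGraph V) (hG : G.Connected) : G.ediam ≠ ⊤ := by
  have hle : G.ediam ≤ (Fintype.card V : ℕ∞) := by
    apply SimpleGraph.ediam_le_of_edist_le
    intro a b
    obtain ⟨p⟩ := hG.preconnected a b
    calc G.edist a b ≤ (p.bypass.length : ℕ∞) := SimpleGraph.edist_le _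
      _ ≤ (Fintype.card V : ℕ∞) := by
          exact_mod_cast (p.bypass_isPath.length_lt).le
  exact ne_top_of_le_ne_top (by simp) hle

end Aux

lemma rayleigh_ge {n : ℕ} (hn : 3 ≤ n) (G : SimpleGraph (Fin n)) [DecidableRel G.Adj]
    (hG : G.Connected) (x : Fin n → ℝ) (hx : x ≠ 0) (hsum : (∑ i, x i) = 0) :
    4 / ((n:ℝ) * G.diam) ≤ (x ⬝ᵥ ((G.lapMatrix ℝ).mulVec x)) / (x ⬝ᵥ x) := by
  classical
  set D : ℕ := G.diam with hDdef
  set Q : ℝ := x ⬝ᵥ ((G.lapMatrix ℝ).mulVec x) with hQdef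
  -- Q as double sum
  have hQ : Q = (∑ i, ∑ j, if G.Adj i j then (x i - x j)^2 else 0) / 2 := by
    rw [hQdef, ← Matrix.toLinearMap₂'_apply', SimpleGraph.lapMatrix_toLinearMap₂']
  have hedge : ∑ e ∈ G.edgeFinset, gx x e = Q := by
    have h2 := sum_edgeFinset_lift G (fun a b => (x a - x b)^2) (fun a b => by ring)
    have : ∑ e ∈ G.edgeFinset, gx x e =
        ∑ e ∈ G.edgeFinset, Sym2.lift ⟨fun a b => (x a - x b)^2, fun a b => by ring⟩ e := rfl
    rw [this, hQ]
    linarith [h2]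
  have hQnn : 0 ≤ Q := by
    rw [← hedge]
    exact Finset.sum_nonneg (fun e _ => gx_nonneg x e)
  -- extremal vertices
  obtain ⟨u, -, hu⟩ := Finset.exists_max_image (Finset.univ : Finset (Fin n)) x
    ⟨⟨0, by omega⟩, Finset.mem_univ _⟩
  obtain ⟨v, -, hv⟩ := Finset.exists_min_image (Finset.univ : Finset (Fin n)) x
    ⟨⟨0, by omega⟩, Finset.mem_univ _⟩
  set Mx := x u
  set mx := x v
  have hu' : ∀ a, x a ≤ Mx := fun a => hu a (Finset.mem_univ a)
  have hv' : ∀ a, mx ≤ x a := fun a => hv a (Finset.mem_univ a)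
  have hnpos : (0:ℝ) < n := by positivity
  have hM0 : 0 ≤ Mx := by
    by_contra h
    push_neg at h
    have : ∑ i, x i < 0 := by
      calc ∑ i, x i ≤ ∑ _i : Fin n, Mx := Finset.sum_le_sum (fun i _ => hu' i)
        _ = n * Mx := by rw [Finset.sum_const]; simp [mul_comm]
        _ < 0 := by nlinarith
    linarith [hsum ▸ this]
  have hm0 : mx ≤ 0 := by
    by_contra h
    push_neg at h
    have : 0 < ∑ i, x i := by
      calc (0:ℝ) < n * mx := by positivity
        _ = ∑ _i : Fin n, mx := by rw [Finset.sum_const]; simp [mul_comm]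
        _ ≤ ∑ i, x i := Finset.sum_le_sum (fun i _ => hv' i)
    linarith [hsum ▸ this]
  have hMm : 0 < Mx - mx := by
    rcases lt_or_ge 0 (Mx - mx) with h | h
    · exact h
    · exfalso
      apply hx
      funext i
      have h1 : Mx = 0 := le_antisymm (by linarith) hM0
      have h2 : mx = 0 := le_antisymm hm0 (by linarith)
      have := hu' i
      have := hv' i
      simp only [Pi.zero_apply]
      linarith
  have huv : u ≠ v := by
    intro h
    have : Mx = mx := congrArg x h
    linarith
  -- x ⬝ x bounds
  have hxx_eq : x ⬝ᵥ x = ∑ i, x i ^ 2 := by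
    simp [dotProduct, sq]
  have hxx_le : x ⬝ᵥ x ≤ (n:ℝ) * (Mx - mx)^2 / 4 := by
    rw [hxx_eq]
    have step : ∀ i ∈ Finset.univ, x i ^ 2 ≤ (Mx + mx) * x i - mx * Mx := by
      intro i _
      nlinarith [mul_nonneg (sub_nonneg.mpr (hu' i)) (sub_nonneg.mpr (hv' i))]
    calc ∑ i, x i ^ 2 ≤ ∑ i, ((Mx + mx) * x i - mx * Mx) := Finset.sum_le_sum step
      _ = (Mx + mx) * (∑ i, x i) - n * (mx * Mx) := by
          rw [Finset.sum_sub_distrib, ← Finset.mul_sum, Finset.sum_const]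
          simp [mul_comm]
      _ = - (n * (mx * Mx)) := by rw [hsum]; ring
      _ ≤ (n:ℝ) * (Mx - mx)^2 / 4 := by nlinarith [sq_nonneg (Mx + mx)]
  have hxx_pos : 0 < x ⬝ᵥ x := by
    rw [hxx_eq]
    obtain ⟨i, hi⟩ := Function.ne_iff.mp hx
    refine Finset.sum_pos' (fun j _ => sq_nonneg _) ⟨i, Finset.mem_univ i, ?_⟩
    have : 0 < |x i| := abs_pos.mpr hi
    nlinarith [sq_abs (x i)]
  -- path bound
  have hdistD : G.dist u v ≤ D := SimpleGraph.dist_le_diam (ediam_ne_top G hG)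
  have hD1 : 1 ≤ D := by
    have h1 : 1 ≤ G.dist u v := (hG.preconnected u v).pos_dist_of_ne huv
    omega
  obtain ⟨p, hp⟩ := (hG.preconnected u v).exists_walk_length_eq_dist
  have hqlen : p.bypass.length ≤ D := le_trans (by rw [← hp]; exact p.length_bypass_le) hdistD
  have hlist : (p.bypass.edges.map (gx x)).sum ≤ Q := by
    have hnodup := p.bypass_isPath.edges_nodup
    have heq : ∑ e ∈ p.bypass.edges.toFinset, gx x e = (p.bypass.edges.map (gx x)).sum :=
      List.sum_toFinset _ hnodup
    rw [← heq, ← hedge]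
    apply Finset.sum_le_sum_of_subset_of_nonneg
    · intro e he
      rw [List.mem_toFinset] at he
      rw [SimpleGraph.mem_edgeFinset]
      exact p.bypass.edges_subset_edgeSet he
    · exact fun e _ _ => gx_nonneg x e
  have hkey : (Mx - mx)^2 ≤ (D:ℝ) * Q := by
    have h1 := walk_sq_le x p.bypass
    have h2 : ((p.bypass.length : ℕ) : ℝ) ≤ (D:ℝ) := by exact_mod_cast hqlen
    have h3 : (0:ℝ) ≤ (p.bypass.edges.map (gx x)).sum :=
      List.sum_nonneg (by
        intro y hy
        obtain ⟨e, _, rfl⟩ := List.mem_map.mp hy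
        exact gx_nonneg x e)
    calc (Mx - mx)^2 = (x u - x v)^2 := rfl
      _ ≤ (p.bypass.length : ℝ) * (p.bypass.edges.map (gx x)).sum := h1
      _ ≤ (D:ℝ) * (p.bypass.edges.map (gx x)).sum := by nlinarith
      _ ≤ (D:ℝ) * Q := by
          apply mul_le_mul_of_nonneg_left hlist
          positivity
  -- conclude
  have hDpos : (0:ℝ) < (D:ℝ) := by exact_mod_cast hD1
  rw [div_le_div_iff₀ (by positivity) hxx_pos]
  nlinarith [hxx_le, hkey, mul_le_mul_of_nonneg_left hkey (le_of_lt hnpos), hMm, hQnn,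
    mul_nonneg (mul_nonneg hnpos.le hDpos.le) hQnn]

lemma randic_ge {n : ℕ} (hn : 3 ≤ n) (G : SimpleGraph (Fin n)) (hG : G.Connected) :
    (Real.sqrt ((n:ℝ) - 1) + 1) / 2 ≤ randicIndex G := by
  classical
  letI : DecidableRel G.Adj := Classical.decRel _
  have hcard : Fintype.card (Fin n) = n := Fintype.card_fin n
  have hn1 : (1:ℝ) ≤ (n:ℝ) - 1 := by
    have : (3:ℝ) ≤ (n:ℝ) := by exact_mod_cast hn
    linarith
  have hsN : Real.sqrt ((n:ℝ)-1) ^ 2 = (n:ℝ)-1 := Real.sq_sqrt (by linarith)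
  have hsN1 : 1 ≤ Real.sqrt ((n:ℝ)-1) := by
    have := Real.sqrt_le_sqrt hn1
    simpa using this
  have hsNpos : 0 < Real.sqrt ((n:ℝ)-1) := by linarith
  -- degrees
  have hdeg1 : ∀ v : Fin n, 1 ≤ G.degree v := fun v =>
    conn_degree_pos G hG (by omega) v
  have hdegN : ∀ v : Fin n, (G.degree v : ℝ) ≤ (n:ℝ) - 1 := by
    intro v
    have := SimpleGraph.degree_lt_card_verts (G := G) v
    rw [hcard] at this
    have : G.degree v ≤ n - 1 := by omega
    have h' : (G.degree v : ℝ) ≤ ((n-1 : ℕ) : ℝ) := by exact_mod_cast this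
    rwa [Nat.cast_sub (by omega), Nat.cast_one] at h'
  -- step 1: 2R = double sum
  have h2R : 2 * randicIndex G =
      ∑ i, ∑ j, if G.Adj i j then 1 / Real.sqrt ((G.degree i : ℝ) * (G.degree j : ℝ)) else 0 := by
    rw [randicIndex]
    exact sum_edgeFinset_lift G _ _
  -- step 2: inner sums
  have hinner : ∀ i : Fin n,
      Real.sqrt (G.degree i) / Real.sqrt ((n:ℝ)-1) ≤
      ∑ j, (if G.Adj i j then 1 / Real.sqrt ((G.degree i : ℝ) * (G.degree j : ℝ)) else 0) := by
    intro i
    have hdi : (0:ℝ) < (G.degree i : ℝ) := by exact_mod_cast hdeg1 i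
    have hsdi : Real.sqrt (G.degree i) ^ 2 = (G.degree i : ℝ) := Real.sq_sqrt hdi.le
    have hsdipos : 0 < Real.sqrt (G.degree i) := Real.sqrt_pos.mpr hdi
    have hterm : ∀ j, G.Adj i j →
        1 / (Real.sqrt (G.degree i) * Real.sqrt ((n:ℝ)-1)) ≤
        1 / Real.sqrt ((G.degree i : ℝ) * (G.degree j : ℝ)) := by
      intro j hj
      rw [← Real.sqrt_mul hdi.le]
      apply one_div_le_one_div_of_le
      · apply Real.sqrt_pos.mpr
        have hdj : (0:ℝ) < (G.degree j : ℝ) := by exact_mod_cast hdeg1 j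
        exact mul_pos hdi hdj
      · apply Real.sqrt_le_sqrt
        exact mul_le_mul_of_nonneg_left (hdegN j) hdi.le
    calc Real.sqrt (G.degree i) / Real.sqrt ((n:ℝ)-1)
        = (G.degree i : ℝ) * (1 / (Real.sqrt (G.degree i) * Real.sqrt ((n:ℝ)-1))) := by
          field_simp
          nlinarith [hsdi]
      _ = ∑ j ∈ G.neighborFinset i, (1 / (Real.sqrt (G.degree i) * Real.sqrt ((n:ℝ)-1))) := by
          rw [Finset.sum_const, ← SimpleGraph.degree, nsmul_eq_mul]
      _ ≤ ∑ j ∈ G.neighborFinset i, 1 / Real.sqrt ((G.degree i : ℝ) * (G.degree j : ℝ)) := by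
          apply Finset.sum_le_sum
          intro j hj
          exact hterm j ((SimpleGraph.mem_neighborFinset G i j).mp hj)
      _ = ∑ j, (if G.Adj i j then 1 / Real.sqrt ((G.degree i : ℝ) * (G.degree j : ℝ)) else 0) := by
          rw [SimpleGraph.neighborFinset_eq_filter, Finset.sum_filter]
  -- step 3: sum of sqrt degrees
  have hsum_deg : 2*((n:ℝ)-1) ≤ ∑ v, (G.degree v : ℝ) := by
    have h1 := SimpleGraph.sum_degrees_eq_twice_card_edges G
    have h2 := conn_card_le_edges G hG
    rw [hcard] at h2
    have h3 : 2*(n-1) ≤ ∑ v, G.degree v := by omega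
    calc 2*((n:ℝ)-1) = ((2*(n-1) : ℕ) : ℝ) := by
          push_cast [Nat.cast_sub (by omega : 1 ≤ n)]; ring
      _ ≤ ((∑ v, G.degree v : ℕ) : ℝ) := by exact_mod_cast h3
      _ = ∑ v, (G.degree v : ℝ) := by push_cast; rfl
  have hsqrt_sum : ((n:ℝ)-1) + Real.sqrt ((n:ℝ)-1) ≤ ∑ v, Real.sqrt (G.degree v) := by
    have hkey : ∀ v ∈ Finset.univ, (((n:ℝ)-1) - 1) + ((G.degree v : ℝ) - 1) * (Real.sqrt ((n:ℝ)-1) - 1)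
        ≤ (((n:ℝ)-1) - 1) * Real.sqrt (G.degree v) := by
      intro v _
      exact chord_sqrt hn1 (by exact_mod_cast hdeg1 v) (hdegN v)
    have hs := Finset.sum_le_sum hkey
    rw [Finset.sum_add_distrib, Finset.sum_const, ← Finset.sum_mul, Finset.sum_sub_distrib,
      Finset.sum_const, ← Finset.mul_sum] at hs
    simp only [Finset.card_univ, hcard, nsmul_eq_mul] at hs
    have hq : 0 ≤ Real.sqrt ((n:ℝ)-1) - 1 := by linarith
    have hn2 : (0:ℝ) < (n:ℝ) - 2 := by
      have : (3:ℝ) ≤ (n:ℝ) := by exact_mod_cast hn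
      linarith
    have h4 : ((n:ℝ) - 2) * (Real.sqrt ((n:ℝ)-1) - 1)
        ≤ (∑ v, (G.degree v:ℝ) - (n:ℝ) * 1) * (Real.sqrt ((n:ℝ)-1) - 1) := by
      apply mul_le_mul_of_nonneg_right _ hq
      linarith
    nlinarith [hs, h4]
  -- step 4: combine
  have hfinal : Real.sqrt ((n:ℝ)-1) + 1 ≤ 2 * randicIndex G := by
    rw [h2R]
    calc Real.sqrt ((n:ℝ)-1) + 1
        = (((n:ℝ)-1) + Real.sqrt ((n:ℝ)-1)) / Real.sqrt ((n:ℝ)-1) := by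
          field_simp
          nlinarith [hsN]
      _ ≤ (∑ v, Real.sqrt (G.degree v)) / Real.sqrt ((n:ℝ)-1) := by
          exact div_le_div_of_nonneg_right hsqrt_sum hsNpos.le
      _ = ∑ v, Real.sqrt (G.degree v) / Real.sqrt ((n:ℝ)-1) := by
          rw [Finset.sum_div]
      _ ≤ _ := Finset.sum_le_sum (fun i _ => hinner i)
  linarith

lemma algConn_ge {n : ℕ} (hn : 3 ≤ n) (G : SimpleGraph (Fin n)) (hG : G.Connected) :
    4 / ((n:ℝ) * G.diam) ≤ algebraicConnectivity G := by
  classical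
  letI : DecidableRel G.Adj := Classical.decRel _
  rw [algebraicConnectivity]
  apply le_csInf
  · -- nonempty
    set x : Fin n → ℝ := Pi.single (⟨0, by omega⟩ : Fin n) (1:ℝ) -
      Pi.single (⟨1, by omega⟩ : Fin n) (1:ℝ) with hxdef
    refine ⟨_, x, ?_, ?_, rfl⟩
    · intro h
      have h0 : x ⟨0, by omega⟩ = 0 := congrFun h _
      simp only [hxdef, Pi.sub_apply, Pi.single_apply, Fin.mk.injEq] at h0
      norm_num at h0
    · simp only [hxdef, Pi.sub_apply, Finset.sum_sub_distrib,
        Finset.sum_pi_single', Finset.mem_univ, if_true]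
      ring
  · rintro r ⟨x, hx, hsum, rfl⟩
    exact rayleigh_ge hn G hG x hx hsum

set_option maxHeartbeats 1000000 in
lemma arith_bound {n D : ℕ} (hn : 3 ≤ n) (hD1 : 1 ≤ D)
    (hD : (D:ℝ) ≤ ((n:ℝ) - 1) ^ ((1:ℝ)/4)) :
    ((n:ℝ) - 3 + 2*Real.sqrt 2) * (1 - Real.cos (Real.pi / n)) ≤
      (Real.sqrt ((n:ℝ)-1) + 1)/2 * (4/((n:ℝ)*D)) := by
  have hn3 : (3:ℝ) ≤ (n:ℝ) := by exact_mod_cast hn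
  have hnpos : (0:ℝ) < n := by linarith
  set N : ℝ := (n:ℝ) - 1 with hNdef
  have hN2 : (2:ℝ) ≤ N := by simp [hNdef]; linarith
  have hNpos : (0:ℝ) < N := by linarith
  set s : ℝ := Real.sqrt N with hsdef
  have hs_sq : s^2 = N := Real.sq_sqrt hNpos.le
  have hs2 : Real.sqrt 2 ≤ s := Real.sqrt_le_sqrt hN2
  have hr2 : Real.sqrt 2 ^ 2 = 2 := Real.sq_sqrt (by norm_num)
  have hr2a : (1.414:ℝ) ≤ Real.sqrt 2 := by nlinarith [Real.sqrt_nonneg 2]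
  have hr2b : Real.sqrt 2 ≤ 1.4143 := by nlinarith [Real.sqrt_nonneg 2]
  have hspos : 0 < s := lt_of_lt_of_le (by linarith) hs2
  set t : ℝ := N ^ ((1:ℝ)/4) with htdef
  have htpos : 0 < t := Real.rpow_pos_of_pos hNpos _
  have ht_sq : t^2 = s := by
    rw [htdef, hsdef, ← Real.rpow_natCast (N ^ ((1:ℝ)/4)) 2, ← Real.rpow_mul hNpos.le,
      Real.sqrt_eq_rpow]
    norm_num
  -- pi facts
  have hpipos := Real.pi_pos
  have hpile : Real.pi ≤ 3.1416 := by linarith [Real.pi_lt_d6]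
  have hpisq : Real.pi^2 ≤ 9.8697 := by nlinarith
  -- cos facts
  have hcos1 : Real.cos (Real.pi / n) ≤ 1 := Real.cos_le_one _
  have hcos2 : 1 - Real.cos (Real.pi / n) ≤ (Real.pi / n)^2 / 2 := by
    linarith [Real.one_sub_sq_div_two_le_cos (x := Real.pi / n)]
  have hA : (0:ℝ) ≤ (n:ℝ) - 3 + 2*Real.sqrt 2 := by nlinarith
  have hmain : ((n:ℝ) - 3 + 2*Real.sqrt 2) * (1 - Real.cos (Real.pi / n)) ≤
      ((n:ℝ) - 3 + 2*Real.sqrt 2) * (Real.pi^2 / (2*(n:ℝ)^2)) := by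
    have : (Real.pi / n)^2 / 2 = Real.pi^2 / (2*(n:ℝ)^2) := by
      field_simp
    rw [← this]
    exact mul_le_mul_of_nonneg_left hcos2 hA
  refine le_trans hmain ?_
  rcases Nat.lt_or_ge D 2 with hDlt | hD2
  · -- D = 1
    have hDeq : D = 1 := by omega
    subst hDeq
    have key : Real.pi^2 * ((n:ℝ) - 3 + 2*Real.sqrt 2) ≤ 4*(n:ℝ)*(s+1) := by
      have hn_eq : (n:ℝ) = s^2 + 1 := by rw [hs_sq]; simp [hNdef]
      rw [hn_eq]
      have h14 : (1.414:ℝ) ≤ s := le_trans hr2a hs2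
      nlinarith [h14, sq_nonneg (s - 1.414), mul_nonneg (sub_nonneg.mpr h14) (sq_nonneg (s - 1.414)),
        hpisq, hr2b, hr2a, hpipos]
    rw [Nat.cast_one, mul_one]
    have hRHS : (s + 1)/2 * (4/(n:ℝ)) = 2*(s+1)/(n:ℝ) := by field_simp; ring
    rw [hRHS, mul_div_assoc', div_le_div_iff₀ (by positivity) hnpos]
    nlinarith [mul_le_mul_of_nonneg_right key hnpos.le, hnpos, hspos]
  · -- D ≥ 2
    have hDt : (D:ℝ) ≤ t := hD
    have ht2 : (2:ℝ) ≤ t := le_trans (by exact_mod_cast hD2) hDt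
    have hDpos : (0:ℝ) < D := by exact_mod_cast (by omega : 0 < D)
    have hAn : (n:ℝ) - 3 + 2*Real.sqrt 2 ≤ (n:ℝ) := by nlinarith
    have step1 : ((n:ℝ) - 3 + 2*Real.sqrt 2) * (Real.pi^2 / (2*(n:ℝ)^2)) ≤
        Real.pi^2 / (2*(n:ℝ)) := by
      have : ((n:ℝ)) * (Real.pi^2 / (2*(n:ℝ)^2)) = Real.pi^2 / (2*(n:ℝ)) := by
        field_simp
      rw [← this]
      exact mul_le_mul_of_nonneg_right hAn (by positivity)
    refine le_trans step1 ?_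
    have hRHS : (s + 1)/2 * (4/((n:ℝ)*(D:ℝ))) = 2*(s+1)/((n:ℝ)*(D:ℝ)) := by
      field_simp
      ring
    rw [hRHS]
    have hmono : 2*(s+1)/((n:ℝ)*t) ≤ 2*(s+1)/((n:ℝ)*(D:ℝ)) := by
      apply div_le_div_of_nonneg_left (by positivity) (by positivity)
      exact mul_le_mul_of_nonneg_left hDt hnpos.le
    refine le_trans ?_ hmono
    rw [div_le_div_iff₀ (by positivity) (by positivity), ← ht_sq]
    have hq : 10*t ≤ 4*t^2 + 4 := by nlinarith [sq_nonneg (t-2), ht2]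
    nlinarith [mul_le_mul_of_nonneg_left hq hnpos.le, hpisq,
      mul_le_mul_of_nonneg_right hpisq (mul_pos hnpos htpos).le, mul_pos hnpos htpos]

theorem randic_mul_algConn_ge_path_of_diam_small
    {n : ℕ} (hn : 3 ≤ n) (G : SimpleGraph (Fin n)) (hG : G.Connected)
    (hD : (G.diam : ℝ) ≤ ((n : ℝ) - 1) ^ ((1 : ℝ) / 4)) :
    randicIndex G * algebraicConnectivity G ≥
      ((n : ℝ) - 3 + 2 * Real.sqrt 2) * (1 - Real.cos (Real.pi / n)) := by
  classical
  letI : DecidableRel G.Adj := Classical.decRel _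
  have hD1 : 1 ≤ G.diam := by
    have h01 : ((⟨0, by omega⟩ : Fin n)) ≠ ⟨1, by omega⟩ := by simp [Fin.ext_iff]
    have hd := ((hG.preconnected (⟨0, by omega⟩ : Fin n) ⟨1, by omega⟩)).pos_dist_of_ne h01
    have hle := SimpleGraph.dist_le_diam (G := G) (ediam_ne_top G hG)
      (u := (⟨0, by omega⟩ : Fin n)) (v := ⟨1, by omega⟩)
    omega
  have hR := randic_ge hn G hG
  have ha := algConn_ge hn G hG
  have harith := arith_bound hn hD1 hD
  have h4pos : (0:ℝ) ≤ 4/((n:ℝ)*G.diam) := by positivity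
  have hRpos : 0 ≤ randicIndex G := le_trans (by positivity) hR
  rw [ge_iff_le]
  calc ((n : ℝ) - 3 + 2 * Real.sqrt 2) * (1 - Real.cos (Real.pi / n))
      ≤ (Real.sqrt ((n:ℝ)-1) + 1)/2 * (4/((n:ℝ)*G.diam)) := harith
    _ ≤ randicIndex G * (4/((n:ℝ)*G.diam)) := mul_le_mul_of_nonneg_right hR h4pos
    _ ≤ randicIndex G * algebraicConnectivity G := mul_le_mul_of_nonneg_left ha hRpos
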